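/- Let F ⊂ K be fields of characteristic t, with F a proper subfield of K. Let p(x) = Σ_{k=0}^n a_k x^k ∈ K[x] be nonconstant with a_n ≠ 0, and let q(x) = Σ_{j=0}^m b_j x^j ∈ K[x] with b_m ≠ 0, such that a_n ∈ F, b_m ∈ F, and b_j ∉ F for some j ≥ 1. If t does not divide n, then the composition p ∘ q has some coefficient not in F, and D_F(p ∘ q) = D_F(q). -/

import Mathlib

open Polynomial

/-- The `F`-deficit of a polynomial `p`: `natDegree p` minus the largest index
of a coefficient not lying in `F`. When all coefficients lie in `F`, the set
below is empty, `sSup ∅ = 0`, and the deficit equals `natDegree p`. -/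
noncomputable def deficit {K : Type*} [Field K] (F : Subfield K) (p : K[X]) : ℕ :=
  p.natDegree - sSup {k : ℕ | p.coeff k ∉ F}

section Aux

open Finset

theorem stmt12_aux {K : Type*} [Field K] (t : ℕ) [CharP K t]
    (F : Subfield K) (hF : F ≠ ⊤)
    (p q : K[X]) (hp : 0 < p.natDegree) (hq : q ≠ 0)
    (hpl : p.leadingCoeff ∈ F) (hql : q.leadingCoeff ∈ F)
    (hj : ∃ j, 1 ≤ j ∧ q.coeff j ∉ F)
    (hdvd : ¬ t ∣ p.natDegree) :
    (∃ k, (p.comp q).coeff k ∉ F) ∧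
      ((p.comp q).natDegree - sSup {k : ℕ | (p.comp q).coeff k ∉ F}
        = q.natDegree - sSup {k : ℕ | q.coeff k ∉ F}) := by
  obtain ⟨n', hn'⟩ : ∃ n', p.natDegree = n' + 1 := ⟨p.natDegree - 1, by omega⟩
  set n := p.natDegree with hn
  set m := q.natDegree with hm
  set S : Set ℕ := {k : ℕ | q.coeff k ∉ F} with hS
  obtain ⟨j, hj1, hjF⟩ := hj
  have hSne : S.Nonempty := ⟨j, hjF⟩
  have hub : ∀ k ∈ S, k ≤ m := fun k hk => le_of_not_gt fun h => hk (by
    rw [coeff_eq_zero_of_natDegree_lt h]; exact zero_mem F)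
  have hSbdd : BddAbove S := ⟨m, hub⟩
  set J := sSup S with hJ
  have hJS : (q.coeff J ∉ F) := Nat.sSup_mem hSne hSbdd
  have hJ1 : 1 ≤ J := le_trans hj1 (le_csSup hSbdd hjF)
  have hbmF : q.coeff m ∈ F := hql
  have hbm0 : q.coeff m ≠ 0 := by
    show q.coeff q.natDegree ≠ 0
    exact leadingCoeff_ne_zero.mpr hq
  have hJm : J < m := by
    rcases lt_or_eq_of_le (hub J hJS) with h | h
    · exact h
    · exact absurd (h ▸ hbmF) hJS
  have hhigh : ∀ k, J < k → q.coeff k ∈ F := fun k hk =>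
    by_contra fun h => absurd (le_csSup hSbdd h) (not_le.mpr hk)
  have hbJ0 : q.coeff J ≠ 0 := fun h => hJS (h ▸ zero_mem F)
  -- the split q = r + s
  set s : K[X] := ∑ i ∈ Finset.range (J + 1), C (q.coeff i) * X ^ i with hs
  have hscoeff : ∀ k, s.coeff k = if k ≤ J then q.coeff k else 0 := by
    intro k
    rw [hs, finset_sum_coeff]
    simp only [coeff_C_mul, coeff_X_pow, mul_ite, mul_one, mul_zero]
    rw [Finset.sum_ite_eq (Finset.range (J + 1)) k (fun i => q.coeff i)]
    simp only [Finset.mem_range]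
    by_cases h : k ≤ J
    · rw [if_pos (by omega), if_pos h]
    · rw [if_neg (by omega), if_neg h]
  set r : K[X] := q - s with hr
  have hrcoeff : ∀ k, r.coeff k = if k ≤ J then 0 else q.coeff k := by
    intro k
    rw [hr, coeff_sub, hscoeff k]
    split <;> simp
  have hrs : q = r + s := (sub_add_cancel q s).symm
  have hrF : ∀ k, r.coeff k ∈ F := by
    intro k
    rw [hrcoeff k]
    split
    · exact zero_mem F
    · exact hhigh k (by omega)
  have hsd : s.natDegree = J := by
    apply le_antisymm
    · apply natDegree_le_iff_coeff_eq_zero.mpr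
      intro N hN
      rw [hscoeff N, if_neg (by omega)]
    · apply le_natDegree_of_ne_zero
      rw [hscoeff J, if_pos le_rfl]
      exact hbJ0
  have hrm : r.coeff m = q.coeff m := by
    rw [hrcoeff m, if_neg (by omega)]
  have hrd : r.natDegree = m := by
    apply le_antisymm
    · exact le_trans (natDegree_sub_le q s) (by rw [hsd]; exact max_le le_rfl (le_of_lt hJm))
    · exact le_natDegree_of_ne_zero (hrm ▸ hbm0)
  have hrl : r.leadingCoeff = q.coeff m := by rw [leadingCoeff, hrd, hrm]
  have hsl : s.leadingCoeff = q.coeff J := by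
    rw [leadingCoeff, hsd, hscoeff J, if_pos le_rfl]
  -- powers of r have coefficients in F
  have hrpow : ∀ (k i : ℕ), (r ^ k).coeff i ∈ F := by
    intro k
    induction k with
    | zero =>
      intro i
      rw [pow_zero, coeff_one]
      split
      · exact one_mem F
      · exact zero_mem F
    | succ k ih =>
      intro i
      rw [pow_succ, coeff_mul]
      exact sum_mem fun c _ => mul_mem (ih c.1) (hrF c.2)
  set i₀ := n' * m + J with hi₀
  -- the coefficient formula for i ≥ i₀
  have key : ∀ i, i₀ ≤ i → (p.comp q).coeff i =
      p.coeff n * ((r ^ n).coeff i + (n : K) * (r ^ n' * s).coeff i) := by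
    intro i hi
    have hcomp : p.comp q = ∑ k ∈ Finset.range (n + 1), C (p.coeff k) * q ^ k := by
      rw [comp, eval₂_eq_sum_range]
    rw [hcomp, finset_sum_coeff]
    rw [Finset.sum_eq_single n]
    · rw [coeff_C_mul]
      rw [hrs, add_pow]
      have hn2 : n + 1 = n' + 1 + 1 := by omega
      rw [hn2, Finset.sum_range_succ, Finset.sum_range_succ, coeff_add, coeff_add,
        finset_sum_coeff]
      have hzero : ∀ jj ∈ Finset.range n',
          (r ^ jj * s ^ (n - jj) * ((n).choose jj : K[X])).coeff i = 0 := by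
        intro jj hjj
        rw [Finset.mem_range] at hjj
        apply coeff_eq_zero_of_natDegree_lt
        calc (r ^ jj * s ^ (n - jj) * ((n).choose jj : K[X])).natDegree
            ≤ (r ^ jj * s ^ (n - jj)).natDegree + ((n).choose jj : K[X]).natDegree :=
              natDegree_mul_le
          _ ≤ (r ^ jj).natDegree + (s ^ (n - jj)).natDegree + 0 := by
              rw [natDegree_natCast]; exact add_le_add_left natDegree_mul_le 0
          _ ≤ jj * m + (n - jj) * J + 0 := by
              apply add_le_add_left
              apply add_le_add
              · exact le_trans natDegree_pow_le (by rw [hrd])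
              · exact le_trans natDegree_pow_le (by rw [hsd])
          _ < i := by
              obtain ⟨d, hd⟩ : ∃ d, n' = jj + d + 1 := ⟨n' - jj - 1, by omega⟩
              have h1 : (n - jj) = d + 2 := by omega
              rw [h1]
              have h2 : (d + 1) * J < (d + 1) * m :=
                mul_lt_mul_of_pos_left hJm (show (0:ℕ) < d + 1 by omega)
              calc jj * m + (d + 2) * J + 0 = jj * m + (d + 1) * J + J := by ring
                _ < jj * m + (d + 1) * m + J := by omega
                _ = (jj + d + 1) * m + J := by ring
                _ = n' * m + J := by rw [hd]
                _ ≤ i := hi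
      rw [Finset.sum_eq_zero hzero]
      have ht1 : (r ^ (n' + 1) * s ^ (n - (n' + 1)) *
          ((n).choose (n' + 1) : K[X])).coeff i = (r ^ n).coeff i := by
        simp [hn']
      have ht2 : (r ^ n' * s ^ (n - n') * ((n).choose n' : K[X])).coeff i =
          (n : K) * (r ^ n' * s).coeff i := by
        rw [show n - n' = 1 from by omega, pow_one,
          show n.choose n' = n from by rw [hn']; exact Nat.choose_succ_self_right n',
          ← C_eq_natCast, coeff_mul_C, mul_comm]
      rw [ht1, ht2, zero_add]
      ring
    · intro b hb hbn
      rw [Finset.mem_range] at hb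
      rw [coeff_C_mul]
      have : (q ^ b).coeff i = 0 := by
        apply coeff_eq_zero_of_natDegree_lt
        calc (q ^ b).natDegree ≤ b * m := natDegree_pow_le
          _ ≤ n' * m := Nat.mul_le_mul_right m (by omega)
          _ < i := by omega
      rw [this, mul_zero]
    · intro h
      exact absurd (Finset.self_mem_range_succ n) h
  -- facts for the main coefficient
  have hanF : p.coeff n ∈ F := hpl
  have hp0 : p ≠ 0 := by
    intro h
    rw [hn, h, natDegree_zero] at hp
    exact lt_irrefl 0 hp
  have han0 : p.coeff n ≠ 0 := by
    show p.coeff p.natDegree ≠ 0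
    exact leadingCoeff_ne_zero.mpr hp0
  have hnK : (n : K) ≠ 0 := fun h => hdvd ((CharP.cast_eq_zero_iff K t n).mp h)
  have hrsld : (r ^ n' * s).coeff i₀ = q.coeff m ^ n' * q.coeff J := by
    have h1 : (r ^ n').natDegree = n' * m := by rw [natDegree_pow, hrd]
    have := coeff_mul_degree_add_degree (r ^ n') s
    rw [h1, hsd, leadingCoeff_pow, hrl, hsl] at this
    exact this
  have hi₀F : (p.comp q).coeff i₀ ∉ F := by
    rw [key i₀ le_rfl, hrsld]
    intro hmem
    have h1 : ((r ^ n).coeff i₀ + (n : K) * (q.coeff m ^ n' * q.coeff J)) ∈ F := by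
      have := mul_mem (inv_mem hanF) hmem
      rwa [inv_mul_cancel_left₀ han0] at this
    have h2 : (n : K) * (q.coeff m ^ n' * q.coeff J) ∈ F := by
      have := sub_mem h1 (hrpow n i₀)
      rwa [add_sub_cancel_left] at this
    have h3 : ((n : K) * q.coeff m ^ n')⁻¹ ∈ F :=
      inv_mem (mul_mem (by exact_mod_cast natCast_mem F n) (pow_mem hbmF n'))
    have h4 : q.coeff J ∈ F := by
      have := mul_mem h3 h2
      rw [show (n : K) * (q.coeff m ^ n' * q.coeff J) = ((n : K) * q.coeff m ^ n') * q.coeff J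
        by ring, inv_mul_cancel_left₀ (mul_ne_zero hnK (pow_ne_zero n' hbm0))] at this
      exact this
    exact hJS h4
  have hgtF : ∀ i, i₀ < i → (p.comp q).coeff i ∈ F := by
    intro i hi
    rw [key i (le_of_lt hi)]
    have h0 : (r ^ n' * s).coeff i = 0 := by
      apply coeff_eq_zero_of_natDegree_lt
      calc (r ^ n' * s).natDegree ≤ (r ^ n').natDegree + s.natDegree := natDegree_mul_le
        _ ≤ n' * m + J := by rw [hsd]; exact add_le_add_left (le_trans natDegree_pow_le (by rw [hrd])) J
        _ < i := hi
    rw [h0, mul_zero, add_zero]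
    exact mul_mem hanF (hrpow n i)
  refine ⟨⟨i₀, hi₀F⟩, ?_⟩
  have hbddT : BddAbove {k : ℕ | (p.comp q).coeff k ∉ F} :=
    ⟨i₀, fun k (hk : (p.comp q).coeff k ∉ F) => le_of_not_gt fun h => hk (hgtF k h)⟩
  have hT : sSup {k : ℕ | (p.comp q).coeff k ∉ F} = i₀ := by
    apply le_antisymm
    · apply csSup_le ⟨i₀, hi₀F⟩
      intro k hk
      exact le_of_not_gt fun h => hk (hgtF k h)
    · exact le_csSup hbddT hi₀F
  have hdeg : (p.comp q).natDegree = n * m := natDegree_comp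
  rw [hT, hdeg, show n * m = n' * m + m from by rw [hn']; ring]
  exact Nat.add_sub_add_left (n' * m) m J

end Aux

theorem stmt12 {K : Type*} [Field K] (t : ℕ) [CharP K t]
    (F : Subfield K) (hF : F ≠ ⊤)
    (p q : K[X]) (hp : 0 < p.natDegree) (hq : q ≠ 0)
    (hpl : p.leadingCoeff ∈ F) (hql : q.leadingCoeff ∈ F)
    (hj : ∃ j, 1 ≤ j ∧ q.coeff j ∉ F)
    (hdvd : ¬ t ∣ p.natDegree) :
    (∃ k, (p.comp q).coeff k ∉ F) ∧ deficit F (p.comp q) = deficit F q := by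
  obtain ⟨h1, h2⟩ := stmt12_aux t F hF p q hp hq hpl hql hj hdvd
  exact ⟨h1, by unfold deficit; exact h2⟩
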